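/- A sequence k : ℤ → ℂ satisfies the Klyachko equations k_m(−k_{m−1} + 2k_m − k_{m+1}) = 0 for all m ∈ ℤ if and only if one of the following holds: (1) there exist a, b ∈ ℂ with k_m = a·m + b for all m ∈ ℤ; or (2) there exist integers i ≤ j and complex numbers x, y such that k_m = x(m − i) for all m ≤ i, k_m = 0 for all i ≤ m ≤ j, and k_m = y(m − j) for all m ≥ j. -/

import Mathlib

private lemma klyachko_rec (k : ℤ → ℂ)
    (hk : ∀ m : ℤ, k m * (-k (m - 1) + 2 * k m - k (m + 1)) = 0)
    (m : ℤ) (h : k m ≠ 0) : k (m + 1) = 2 * k m - k (m - 1) := by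
  have := hk m
  rcases mul_eq_zero.1 this with h1 | h2
  · exact absurd h1 h
  · linear_combination -h2

private lemma klyachko_fwd (k : ℤ → ℂ)
    (hk : ∀ m : ℤ, k m * (-k (m - 1) + 2 * k m - k (m + 1)) = 0)
    (n : ℤ) (h0 : k n = 0) (h1 : k (n + 1) ≠ 0) :
    ∀ t : ℕ, k (n + t) = t * k (n + 1) := by
  have key : ∀ t : ℕ, k (n + t) = t * k (n + 1) ∧ k (n + t + 1) = ((t : ℂ) + 1) * k (n + 1) := by
    intro t
    induction t with
    | zero => constructor <;> simp [h0]
    | succ t ih =>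
      have h2 : k (n + t + 1) ≠ 0 := by
        rw [ih.2]
        exact mul_ne_zero (Nat.cast_add_one_ne_zero t) h1
      have heq := klyachko_rec k hk (n + t + 1) h2
      have e1 : n + t + 1 - 1 = n + t := by ring
      have e2 : n + ((t : ℕ) + 1 : ℕ) = n + t + 1 := by push_cast; ring
      have e3 : n + ((t : ℕ) + 1 : ℕ) + 1 = n + t + 1 + 1 := by push_cast; ring
      constructor
      · rw [e2]
        push_cast
        exact ih.2
      · rw [e3, heq, e1, ih.1, ih.2]
        push_cast
        ring
  intro t
  exact (key t).1

private lemma klyachko_right (k : ℤ → ℂ)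
    (hk : ∀ m : ℤ, k m * (-k (m - 1) + 2 * k m - k (m + 1)) = 0)
    (n : ℤ) (h0 : k n = 0) :
    ∃ j : ℤ, n ≤ j ∧ ∃ y : ℂ,
      (∀ m : ℤ, n ≤ m → m ≤ j → k m = 0) ∧
      (∀ m : ℤ, j ≤ m → k m = y * ((m : ℂ) - (j : ℂ))) := by
  classical
  by_cases hA : ∀ m : ℤ, n ≤ m → k m = 0
  · exact ⟨n, le_refl n, 0, fun m hm _ => hA m hm, fun m hm => by rw [hA m hm]; ring⟩
  · push_neg at hA
    obtain ⟨m₀, hm₀n, hm₀⟩ := hA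
    obtain ⟨lb, ⟨hlbn, hlbne⟩, hleast⟩ :=
      Int.exists_least_of_bdd (P := fun m => n ≤ m ∧ k m ≠ 0)
        ⟨n, fun z hz => hz.1⟩ ⟨m₀, hm₀n, hm₀⟩
    have hlbn' : n + 1 ≤ lb := by
      rcases lt_or_eq_of_le hlbn with h | h
      · omega
      · exact absurd h0 (h ▸ hlbne)
    refine ⟨lb - 1, by omega, k lb, ?_, ?_⟩
    · intro m hm1 hm2
      by_contra hne
      have := hleast m ⟨hm1, hne⟩
      omega
    · intro m hm
      have hj0 : k (lb - 1) = 0 := by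
        by_contra hne
        have := hleast (lb - 1) ⟨by omega, hne⟩
        omega
      have hj1 : k (lb - 1 + 1) ≠ 0 := by
        rw [show lb - 1 + 1 = lb by ring]; exact hlbne
      have hval := klyachko_fwd k hk (lb - 1) hj0 hj1 (m - (lb - 1)).toNat
      have harg : lb - 1 + ((m - (lb - 1)).toNat : ℤ) = m := by omega
      have hZ : ((m - (lb - 1)).toNat : ℤ) = m - (lb - 1) := Int.toNat_of_nonneg (by omega)
      have hcast : (((m - (lb - 1)).toNat : ℕ) : ℂ) = (m : ℂ) - ((lb : ℂ) - 1) := by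
        have h' := congrArg (fun z : ℤ => (z : ℂ)) hZ
        push_cast at h'
        linear_combination h'
      rw [harg] at hval
      rw [hval, show lb - 1 + 1 = lb by ring, hcast]
      push_cast
      ring

theorem klyachko_solutions (k : ℤ → ℂ) :
    (∀ m : ℤ, k m * (-k (m - 1) + 2 * k m - k (m + 1)) = 0) ↔
      ((∃ a b : ℂ, ∀ m : ℤ, k m = a * (m : ℂ) + b) ∨
        (∃ i j : ℤ, i ≤ j ∧ ∃ x y : ℂ,
          (∀ m : ℤ, m ≤ i → k m = x * ((m : ℂ) - (i : ℂ))) ∧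
          (∀ m : ℤ, i ≤ m → m ≤ j → k m = 0) ∧
          (∀ m : ℤ, j ≤ m → k m = y * ((m : ℂ) - (j : ℂ))))) := by
  constructor
  · intro hk
    by_cases hz : ∃ n : ℤ, k n = 0
    · obtain ⟨n, hn⟩ := hz
      right
      obtain ⟨j, hnj, y, hmidr, hr⟩ := klyachko_right k hk n hn
      set g : ℤ → ℂ := fun m => k (-m) with hg
      have hgk : ∀ m : ℤ, g m * (-g (m - 1) + 2 * g m - g (m + 1)) = 0 := by
        intro m
        have h := hk (-m)
        have e1 : -(m - 1) = -m + 1 := by ring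
        have e2 : -(m + 1) = -m - 1 := by ring
        simp only [hg, e1, e2]
        linear_combination h
      have hg0 : g (-n) = 0 := by simp [hg, hn]
      obtain ⟨j', hnj', y', hmidl, hl⟩ := klyachko_right g hgk (-n) hg0
      refine ⟨-j', j, by omega, -y', y, ?_, ?_, hr⟩
      · intro m hm
        have := hl (-m) (by omega)
        simp only [hg, neg_neg] at this
        rw [this]
        push_cast
        ring
      · intro m h1 h2
        rcases le_total m n with h | h
        · have := hmidl (-m) (by omega) (by omega)
          simpa [hg] using this
        · exact hmidr m h h2
    · push_neg at hz
      left
      refine ⟨k 1 - k 0, k 0, ?_⟩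
      have key : ∀ m : ℤ, k m = (k 1 - k 0) * (m : ℂ) + k 0 ∧
          k (m + 1) = (k 1 - k 0) * ((m : ℂ) + 1) + k 0 := by
        intro m
        induction m using Int.induction_on with
        | zero => constructor <;> push_cast <;> ring
        | succ i ih =>
          have h2 := klyachko_rec k hk ((i : ℤ) + 1) (hz _)
          rw [show (i : ℤ) + 1 - 1 = (i : ℤ) by ring, ih.1, ih.2] at h2
          constructor
          · rw [ih.2]
            push_cast
            ring
          · rw [h2]
            push_cast
            ring
        | pred i ih =>
          have h2 := hk (-(i : ℤ))
          have hc : -k (-(i : ℤ) - 1) + 2 * k (-(i : ℤ)) - k (-(i : ℤ) + 1) = 0 := by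
            rcases mul_eq_zero.1 h2 with hc | hc
            · exact absurd hc (hz _)
            · exact hc
          have hkm1 : k (-(i : ℤ) - 1) = 2 * k (-(i : ℤ)) - k (-(i : ℤ) + 1) := by
            linear_combination -hc
          constructor
          · rw [hkm1, ih.1, ih.2]
            push_cast
            ring
          · rw [show -(i : ℤ) - 1 + 1 = -(i : ℤ) by ring, ih.1]
            push_cast
            ring
      intro m
      exact (key m).1
  · rintro (⟨a, b, h⟩ | ⟨i, j, hij, x, y, hl, hmid, hr⟩)
    · intro m
      rw [h m, h (m - 1), h (m + 1)]
      push_cast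
      ring
    · intro m
      by_cases h1 : i ≤ m ∧ m ≤ j
      · rw [hmid m h1.1 h1.2]; ring
      · rcases (by omega : m < i ∨ j < m) with h | h
        · rw [hl m (by omega), hl (m - 1) (by omega), hl (m + 1) (by omega)]
          push_cast
          ring
        · rw [hr m (by omega), hr (m - 1) (by omega), hr (m + 1) (by omega)]
          push_cast
          ring
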